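/- Let n ≥ 3 and let φ : Bⁿ → ℝⁿ be the restriction of a Möbius transformation of Sⁿ with φ(Bⁿ) ⊂ ℝⁿ. Then (1/3)‖Dφ(0)‖ ≤ sup_{|x| ≤ 1/2} |φ(x) − φ(0)| ≤ ‖Dφ(0)‖. -/

import Mathlib

open EuclideanGeometry Metric

/-- `φ` is, on the open unit ball, the restriction of a Möbius transformation of `Sⁿ` mapping
the ball into `ℝⁿ`: either an affine conformal map `y ↦ b + c A(y − p)` or an inversion
`y ↦ b + (c/|y − p|²) A(y − p)` with pole `p` outside the unit ball. -/
def IsMoebiusOnBall {n : ℕ} (φ : EuclideanSpace ℝ (Fin n) → EuclideanSpace ℝ (Fin n)) : Prop :=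
  (∃ (b p : EuclideanSpace ℝ (Fin n)) (c : ℝ)
      (A : EuclideanSpace ℝ (Fin n) →ₗᵢ[ℝ] EuclideanSpace ℝ (Fin n)),
      0 < c ∧ ∀ y, ‖y‖ < 1 → φ y = b + c • A (y - p)) ∨
  (∃ (b p : EuclideanSpace ℝ (Fin n)) (c : ℝ)
      (A : EuclideanSpace ℝ (Fin n) →ₗᵢ[ℝ] EuclideanSpace ℝ (Fin n)),
      0 < c ∧ 1 ≤ ‖p‖ ∧ ∀ y, ‖y‖ < 1 → φ y = b + (c / ‖y - p‖ ^ 2) • A (y - p))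

/-- The operator norm of an isometric continuous linear map on a nontrivial Euclidean space. -/
lemma opNorm_of_isometry {n : ℕ} (hn : 0 < n)
    (T : EuclideanSpace ℝ (Fin n) →L[ℝ] EuclideanSpace ℝ (Fin n))
    (h : ∀ z, ‖T z‖ = ‖z‖) : ‖T‖ = 1 := by
  refine le_antisymm (T.opNorm_le_bound zero_le_one (fun z => by rw [h, one_mul])) ?_
  have hu : ‖EuclideanSpace.single (⟨0, hn⟩ : Fin n) (1:ℝ)‖ = 1 := by
    simp [EuclideanSpace.norm_single]
  have := T.le_opNorm (EuclideanSpace.single (⟨0, hn⟩ : Fin n) (1:ℝ))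
  rw [h, hu] at this
  linarith

/-- In the affine case, the norm of the derivative at `0` is `c`. -/
lemma affine_fderiv_norm (n : ℕ) (hn : 3 ≤ n) (b p : EuclideanSpace ℝ (Fin n)) (c : ℝ)
    (A : EuclideanSpace ℝ (Fin n) →ₗᵢ[ℝ] EuclideanSpace ℝ (Fin n)) (hc : 0 < c)
    (φ : EuclideanSpace ℝ (Fin n) → EuclideanSpace ℝ (Fin n))
    (hb : ∀ y, ‖y‖ < 1 → φ y = b + c • A (y - p)) : ‖fderiv ℝ φ 0‖ = c := by
  set M : EuclideanSpace ℝ (Fin n) →L[ℝ] EuclideanSpace ℝ (Fin n) :=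
    c • A.toContinuousLinearMap with hM
  have hnb : ∀ᶠ y in nhds (0:EuclideanSpace ℝ (Fin n)), ‖y‖ < 1 := by
    filter_upwards [Metric.ball_mem_nhds (0:EuclideanSpace ℝ (Fin n)) one_pos] with y hy
    simpa [mem_ball_zero_iff] using hy
  have hg : HasFDerivAt (fun y => b + M (y - p)) M 0 := by
    have h0 : HasFDerivAt (fun y : EuclideanSpace ℝ (Fin n) => b + (M y - M p)) M 0 :=
      ((M.hasFDerivAt (x := (0:EuclideanSpace ℝ (Fin n)))).sub_const (M p)).const_add b
    exact h0.congr_of_eventuallyEq (Filter.Eventually.of_forall fun y => by simp only [map_sub])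
  have hfe : φ =ᶠ[nhds 0] fun y => b + M (y - p) := by
    filter_upwards [hnb] with y hy
    rw [hb y hy]; simp [hM, LinearIsometry.coe_toContinuousLinearMap]
  have hD : fderiv ℝ φ 0 = M := (hg.congr_of_eventuallyEq hfe).fderiv
  have hA : ‖A.toContinuousLinearMap‖ = 1 :=
    opNorm_of_isometry (by omega) A.toContinuousLinearMap (fun z => A.norm_map z)
  rw [hD, hM, norm_smul, hA, Real.norm_eq_abs, abs_of_pos hc, mul_one]

/-- In the inversion case, the norm of the derivative at `0` is `c / ‖p‖²`. -/
lemma inversion_fderiv_norm (n : ℕ) (hn : 3 ≤ n) (b p : EuclideanSpace ℝ (Fin n)) (c : ℝ)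
    (A : EuclideanSpace ℝ (Fin n) →ₗᵢ[ℝ] EuclideanSpace ℝ (Fin n)) (hc : 0 < c) (hp : 1 ≤ ‖p‖)
    (φ : EuclideanSpace ℝ (Fin n) → EuclideanSpace ℝ (Fin n))
    (hb : ∀ y, ‖y‖ < 1 → φ y = b + (c / ‖y - p‖ ^ 2) • A (y - p)) :
    ‖fderiv ℝ φ 0‖ = c / ‖p‖ ^ 2 := by
  have h0p : (0 : EuclideanSpace ℝ (Fin n)) ≠ p := by
    intro h; rw [← h] at hp; simp at hp; linarith
  set M : EuclideanSpace ℝ (Fin n) →L[ℝ] EuclideanSpace ℝ (Fin n) :=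
    c • A.toContinuousLinearMap with hM
  set Rf : EuclideanSpace ℝ (Fin n) →L[ℝ] EuclideanSpace ℝ (Fin n) :=
    ((Submodule.reflection (ℝ ∙ ((0:EuclideanSpace ℝ (Fin n)) - p))ᗮ :
      EuclideanSpace ℝ (Fin n) ≃ₗᵢ[ℝ] EuclideanSpace ℝ (Fin n)) :
      EuclideanSpace ℝ (Fin n) →L[ℝ] EuclideanSpace ℝ (Fin n)) with hRf
  have h1 : HasFDerivAt (inversion p 1)
      (((1 : ℝ) / dist (0:EuclideanSpace ℝ (Fin n)) p) ^ 2 • Rf) 0 :=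
    hasFDerivAt_inversion h0p
  have hg : HasFDerivAt (fun y => b + M (inversion p 1 y - p))
      (M.comp (((1 : ℝ) / dist (0:EuclideanSpace ℝ (Fin n)) p) ^ 2 • Rf)) 0 :=
    ((M.hasFDerivAt.comp 0 (h1.sub_const p))).const_add b
  have hnb : ∀ᶠ y in nhds (0:EuclideanSpace ℝ (Fin n)), ‖y‖ < 1 := by
    filter_upwards [Metric.ball_mem_nhds (0:EuclideanSpace ℝ (Fin n)) one_pos] with y hy
    simpa [mem_ball_zero_iff] using hy
  have hfe : φ =ᶠ[nhds 0] fun y => b + M (inversion p 1 y - p) := by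
    filter_upwards [hnb] with y hy
    rw [hb y hy, inversion_def]
    simp only [hM, ContinuousLinearMap.smul_apply, LinearIsometry.coe_toContinuousLinearMap,
      vadd_eq_add, add_sub_cancel_right, dist_eq_norm, one_pow, div_pow, one_div]
    simp [vsub_eq_sub, div_eq_mul_inv, inv_pow, mul_smul]
  have hD : fderiv ℝ φ 0 = M.comp (((1:ℝ) / dist (0:EuclideanSpace ℝ (Fin n)) p) ^ 2 • Rf) :=
    (hg.congr_of_eventuallyEq hfe).fderiv
  have hcomp : M.comp (((1:ℝ) / dist (0:EuclideanSpace ℝ (Fin n)) p) ^ 2 • Rf)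
      = (((1:ℝ) / dist (0:EuclideanSpace ℝ (Fin n)) p) ^ 2 * c) •
        (A.toContinuousLinearMap.comp Rf) := by
    ext z
    simp [hM, mul_smul, LinearIsometry.map_smul]
  have hAR : ‖A.toContinuousLinearMap.comp Rf‖ = 1 := by
    refine opNorm_of_isometry (by omega) _ (fun z => ?_)
    simp [hRf, A.norm_map]
  rw [hD, hcomp, norm_smul, hAR, mul_one, Real.norm_eq_abs, dist_eq_norm, zero_sub, norm_neg]
  rw [abs_of_pos (by positivity)]
  rw [div_pow, one_pow, one_div, inv_mul_eq_div]

/-- In the inversion case, `‖φ x − φ 0‖ = c ‖x‖ / (‖x − p‖ ‖p‖)` on the ball. -/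
lemma inversion_dist_formula (n : ℕ) (b p : EuclideanSpace ℝ (Fin n)) (c : ℝ)
    (A : EuclideanSpace ℝ (Fin n) →ₗᵢ[ℝ] EuclideanSpace ℝ (Fin n)) (hc : 0 < c) (hp : 1 ≤ ‖p‖)
    (φ : EuclideanSpace ℝ (Fin n) → EuclideanSpace ℝ (Fin n))
    (hb : ∀ y, ‖y‖ < 1 → φ y = b + (c / ‖y - p‖ ^ 2) • A (y - p)) :
    ∀ x, ‖x‖ < 1 → ‖φ x - φ 0‖ = c * ‖x‖ / (‖x - p‖ * ‖p‖) := by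
  intro x hx
  have h0p : (0 : EuclideanSpace ℝ (Fin n)) ≠ p := by
    intro h; rw [← h] at hp; simp at hp; linarith
  have hxp : x ≠ p := by
    intro h; rw [h] at hx; linarith
  have key : ∀ y, ‖y‖ < 1 → φ y - b = c • A (inversion p 1 y - p) := by
    intro y hy
    rw [hb y hy, inversion_def]
    simp only [vadd_eq_add, add_sub_cancel_right, dist_eq_norm, one_pow, div_pow, one_div,
      add_sub_cancel_left]
    simp [vsub_eq_sub, div_eq_mul_inv, inv_pow, mul_smul]
  have h1 : φ x - φ 0 = c • A (inversion p 1 x - inversion p 1 0) := by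
    have e1 := key x hx
    have e2 := key 0 (by simp)
    have h2 : φ x - φ 0 = (φ x - b) - (φ 0 - b) := by abel
    rw [h2, e1, e2, ← smul_sub, ← A.map_sub]
    congr 1
    abel
  rw [h1, norm_smul, A.norm_map, Real.norm_eq_abs, abs_of_pos hc, ← dist_eq_norm,
    dist_inversion_inversion hxp h0p, one_pow]
  rw [dist_eq_norm, dist_eq_norm, dist_eq_norm, zero_sub, norm_neg, sub_zero]
  ring

/-- For `n ≥ 3` and `φ : Bⁿ → ℝⁿ` the restriction of a Möbius transformation of `Sⁿ`,
`(1/3)‖Dφ(0)‖ ≤ sup_{|x| ≤ 1/2} |φ(x) − φ(0)| ≤ ‖Dφ(0)‖`. -/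
theorem moebius_derivative_bounds (n : ℕ) (hn : 3 ≤ n)
    (φ : EuclideanSpace ℝ (Fin n) → EuclideanSpace ℝ (Fin n))
    (hφ : IsMoebiusOnBall φ) :
    (∀ x, ‖x‖ ≤ 1 / 2 → ‖φ x - φ 0‖ ≤ ‖fderiv ℝ φ 0‖) ∧
    (1 / 3 : ℝ) * ‖fderiv ℝ φ 0‖ ≤
      sSup {r : ℝ | ∃ x, ‖x‖ ≤ 1 / 2 ∧ r = ‖φ x - φ 0‖} := by
  obtain ⟨b, p, c, A, hc, hb⟩ | ⟨b, p, c, A, hc, hp, hb⟩ := hφ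
  · -- affine case
    have hnorm : ‖fderiv ℝ φ 0‖ = c := affine_fderiv_norm n hn b p c A hc φ hb
    have hval : ∀ x, ‖x‖ < 1 → ‖φ x - φ 0‖ = c * ‖x‖ := by
      intro x hx
      rw [hb x hx, hb 0 (by simp)]
      rw [show (b + c • A (x - p)) - (b + c • A (0 - p)) = c • (A (x - p) - A (0 - p)) by
        rw [smul_sub]; abel]
      rw [← A.map_sub, show x - p - (0 - p) = x by abel]
      rw [norm_smul, A.norm_map, Real.norm_eq_abs, abs_of_pos hc]
    have part1 : ∀ x, ‖x‖ ≤ 1 / 2 → ‖φ x - φ 0‖ ≤ ‖fderiv ℝ φ 0‖ := by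
      intro x hx
      rw [hnorm, hval x (by linarith)]
      nlinarith [norm_nonneg x]
    refine ⟨part1, ?_⟩
    set x₀ : EuclideanSpace ℝ (Fin n) :=
      (1/2 : ℝ) • EuclideanSpace.single (⟨0, by omega⟩ : Fin n) (1:ℝ) with hx₀def
    have hx₀ : ‖x₀‖ = 1/2 := by
      rw [hx₀def, norm_smul]; simp [EuclideanSpace.norm_single]
    have hbdd : BddAbove {r : ℝ | ∃ x, ‖x‖ ≤ 1 / 2 ∧ r = ‖φ x - φ 0‖} := by
      refine ⟨‖fderiv ℝ φ 0‖, fun r hr => ?_⟩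
      obtain ⟨x, hx, rfl⟩ := hr
      exact part1 x hx
    have hmem : ‖φ x₀ - φ 0‖ ∈ {r : ℝ | ∃ x, ‖x‖ ≤ 1 / 2 ∧ r = ‖φ x - φ 0‖} :=
      ⟨x₀, by rw [hx₀], rfl⟩
    have hle := le_csSup hbdd hmem
    have hv : ‖φ x₀ - φ 0‖ = c * (1/2) := by rw [hval x₀ (by rw [hx₀]; norm_num), hx₀]
    rw [hnorm]
    rw [hv] at hle
    linarith
  · -- inversion case
    have hnorm : ‖fderiv ℝ φ 0‖ = c / ‖p‖ ^ 2 :=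
      inversion_fderiv_norm n hn b p c A hc hp φ hb
    have hval := inversion_dist_formula n b p c A hc hp φ hb
    have hppos : (0:ℝ) < ‖p‖ := by linarith
    have part1 : ∀ x, ‖x‖ ≤ 1 / 2 → ‖φ x - φ 0‖ ≤ ‖fderiv ℝ φ 0‖ := by
      intro x hx
      have hx1 : ‖x‖ < 1 := by linarith
      have hsub : ‖p‖ - ‖x‖ ≤ ‖x - p‖ := by
        have h := norm_sub_norm_le p x
        rwa [norm_sub_rev] at h
      have hxp_pos : (0:ℝ) < ‖x - p‖ := by linarith
      have hkey : ‖x‖ * ‖p‖ ≤ ‖x - p‖ := by nlinarith [norm_nonneg x]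
      rw [hnorm, hval x hx1, div_le_div_iff₀ (by positivity) (by positivity)]
      nlinarith [mul_le_mul_of_nonneg_left hkey (mul_nonneg hc.le (norm_nonneg p))]
    refine ⟨part1, ?_⟩
    set x₀ : EuclideanSpace ℝ (Fin n) := (2 * ‖p‖)⁻¹ • p with hx₀def
    have hx₀ : ‖x₀‖ = 1/2 := by
      rw [hx₀def, norm_smul, Real.norm_eq_abs, abs_of_pos (by positivity)]
      field_simp
    have hx₀p : ‖x₀ - p‖ = ‖p‖ - 1/2 := by
      have h1 : x₀ - p = ((2 * ‖p‖)⁻¹ - 1) • p := by rw [sub_smul, one_smul]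
      have h2 : (2 * ‖p‖)⁻¹ ≤ 1/2 := by
        rw [inv_le_comm₀ (by positivity) (by norm_num)]
        linarith
      rw [h1, norm_smul, Real.norm_eq_abs, abs_of_nonpos (by linarith)]
      field_simp
      ring
    have hbdd : BddAbove {r : ℝ | ∃ x, ‖x‖ ≤ 1 / 2 ∧ r = ‖φ x - φ 0‖} := by
      refine ⟨‖fderiv ℝ φ 0‖, fun r hr => ?_⟩
      obtain ⟨x, hx, rfl⟩ := hr
      exact part1 x hx
    have hmem : ‖φ x₀ - φ 0‖ ∈ {r : ℝ | ∃ x, ‖x‖ ≤ 1 / 2 ∧ r = ‖φ x - φ 0‖} :=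
      ⟨x₀, by rw [hx₀], rfl⟩
    have hle := le_csSup hbdd hmem
    have hv : ‖φ x₀ - φ 0‖ = c * (1/2) / ((‖p‖ - 1/2) * ‖p‖) := by
      rw [hval x₀ (by rw [hx₀]; norm_num), hx₀, hx₀p]
    rw [hv] at hle
    rw [hnorm]
    have hineq : (1/3 : ℝ) * (c / ‖p‖ ^ 2) ≤ c * (1/2) / ((‖p‖ - 1/2) * ‖p‖) := by
      have h3 : (1/3 : ℝ) * (c / ‖p‖ ^ 2) = c / (3 * ‖p‖ ^ 2) := by ring
      rw [h3, div_le_div_iff₀ (by positivity) (mul_pos (by linarith) hppos)]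
      nlinarith [mul_nonneg hc.le (mul_nonneg hppos.le hppos.le),
        mul_nonneg hc.le hppos.le]
    linarith
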